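/- Let n ≥ 3 and let R = 𝔽₂[x,y]/⟨x^{n+1}, y² + x³⟩, graded with deg x = 2 and deg y = 3. Then y² = x³ ≠ 0 in R; consequently R is not isomorphic as a graded 𝔽₂-algebra to 𝔽₂[x,y']/⟨x^{n+1}, y'²⟩ with deg x = 2, deg y' = 3. -/
import Mathlib

set_option synthInstance.maxHeartbeats 400000

open MvPolynomial

noncomputable section

/-- The ideal `⟨x^(n+1), y² + x³⟩` of `𝔽₂[x,y]`, with `x = X 0`, `y = X 1`. -/
def I₁ (n : ℕ) : Ideal (MvPolynomial (Fin 2) (ZMod 2)) :=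
  Ideal.span {X 0 ^ (n + 1), X 1 ^ 2 + X 0 ^ 3}

/-- The ideal `⟨x^(n+1), y'²⟩` of `𝔽₂[x,y']`, with `x = X 0`, `y' = X 1`. -/
def I₂ (n : ℕ) : Ideal (MvPolynomial (Fin 2) (ZMod 2)) :=
  Ideal.span {X 0 ^ (n + 1), X 1 ^ 2}

/-- Degree-`i` component of a quotient of `𝔽₂[x,y]` by a homogeneous ideal, for the grading
`deg x = 2`, `deg y = 3`. -/
def comp (I : Ideal (MvPolynomial (Fin 2) (ZMod 2))) (i : ℕ) :
    Submodule (ZMod 2) (MvPolynomial (Fin 2) (ZMod 2) ⧸ I) :=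
  Submodule.map (Ideal.Quotient.mkₐ (ZMod 2) I).toLinearMap
    (weightedHomogeneousSubmodule (ZMod 2) ![2, 3] i)

/-- In a `ZMod 2`-algebra, every element satisfies `a + a = 0`. -/
lemma aux_char2_add_self {R : Type*} [CommRing R] [Algebra (ZMod 2) R] (a : R) :
    a + a = 0 := by
  have h2 : (2 : R) = 0 := by
    have h : (2 : ZMod 2) = 0 := by decide
    calc (2 : R) = algebraMap (ZMod 2) R 2 := (map_ofNat (algebraMap (ZMod 2) R) 2).symm
      _ = 0 := by rw [h, map_zero]
  rw [← two_mul, h2, zero_mul]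

/-- The only weighted-homogeneous polynomials of degree 3 for the weights `![2,3]`
over `𝔽₂` are `0` and `X 1`. -/
lemma aux_wh3 (p : MvPolynomial (Fin 2) (ZMod 2))
    (hp : p ∈ weightedHomogeneousSubmodule (ZMod 2) ![2, 3] 3) : p = 0 ∨ p = X 1 := by
  rw [mem_weightedHomogeneousSubmodule] at hp
  have key : p = monomial (Finsupp.single 1 1) (coeff (Finsupp.single 1 1) p) := by
    ext d
    rcases eq_or_ne d (Finsupp.single 1 1) with rfl | hd
    · simp
    · rw [coeff_monomial, if_neg (fun h => hd h.symm)]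
      by_contra hc
      have hw := hp hc
      rw [Finsupp.weight_apply, Finsupp.sum_fintype (h := by simp), Fin.sum_univ_two] at hw
      simp only [Matrix.cons_val_zero, Matrix.cons_val_one, Matrix.head_cons,
        smul_eq_mul] at hw
      have h0 : d 0 = 0 := by omega
      have h1 : d 1 = 1 := by omega
      exact hd (by ext i; fin_cases i <;> simp [h0, h1])
  have hc : coeff (Finsupp.single 1 1) p = 0 ∨ coeff (Finsupp.single 1 1) p = 1 := by
    generalize coeff (Finsupp.single 1 1) p = c; revert c; decide
  rcases hc with hc | hc
  · left; rw [key, hc, map_zero]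
  · right; rw [key, hc, X]

/-- For `n ≥ 3`, `x³ ∉ ⟨x^(n+1), y² + x³⟩`. -/
lemma aux_x3_not_mem (n : ℕ) (hn : 3 ≤ n) :
    (X 0 : MvPolynomial (Fin 2) (ZMod 2)) ^ 3 ∉ I₁ n := by
  set J : Ideal (Polynomial (ZMod 2)) := Ideal.span {Polynomial.X ^ (2 * n + 2)} with hJ
  set t : Polynomial (ZMod 2) ⧸ J := Ideal.Quotient.mk J Polynomial.X with ht
  set φ : MvPolynomial (Fin 2) (ZMod 2) →ₐ[ZMod 2] (Polynomial (ZMod 2) ⧸ J) :=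
    aeval ![t ^ 2, t ^ 3] with hφ
  have hker : I₁ n ≤ RingHom.ker φ := by
    rw [I₁, Ideal.span_le]
    intro q hq
    simp only [Set.mem_insert_iff, Set.mem_singleton_iff] at hq
    rcases hq with rfl | rfl
    · simp only [SetLike.mem_coe, RingHom.mem_ker, map_pow, hφ, aeval_X]
      show ((t ^ 2) ^ (n + 1) : Polynomial (ZMod 2) ⧸ J) = 0
      rw [← pow_mul, ht, ← map_pow, Ideal.Quotient.eq_zero_iff_mem]
      exact Ideal.subset_span (by rw [show 2 * (n + 1) = 2 * n + 2 by ring]; simp)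
    · simp only [SetLike.mem_coe, RingHom.mem_ker, map_add, map_pow, hφ, aeval_X]
      show ((t ^ 3) ^ 2 + (t ^ 2) ^ 3 : Polynomial (ZMod 2) ⧸ J) = 0
      rw [← pow_mul, ← pow_mul, show 3 * 2 = 6 from rfl]
      exact aux_char2_add_self _
  intro hmem
  have h0 : φ ((X 0 : MvPolynomial (Fin 2) (ZMod 2)) ^ 3) = 0 := hker hmem
  rw [map_pow, hφ, aeval_X] at h0
  have hdvd : ((t ^ 2) ^ 3 : Polynomial (ZMod 2) ⧸ J) = 0 := h0
  rw [← pow_mul, ht, ← map_pow, Ideal.Quotient.eq_zero_iff_mem, hJ,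
    Ideal.mem_span_singleton] at hdvd
  have hd := Polynomial.natDegree_le_of_dvd hdvd (pow_ne_zero _ Polynomial.X_ne_zero)
  simp only [Polynomial.natDegree_X_pow] at hd
  omega

/-- For `n ≥ 3`, in `R = 𝔽₂[x,y]/⟨x^(n+1), y² + x³⟩` (with `deg x = 2`, `deg y = 3`) one has
`y² = x³ ≠ 0`; consequently `R` is not graded-isomorphic to `𝔽₂[x,y']/⟨x^(n+1), y'²⟩`. -/
theorem y_sq_ne_zero_and_not_graded_iso (n : ℕ) (hn : 3 ≤ n) :
    Ideal.Quotient.mk (I₁ n) (X 1) ^ 2 = Ideal.Quotient.mk (I₁ n) (X 0) ^ 3 ∧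
    Ideal.Quotient.mk (I₁ n) (X 0) ^ 3 ≠ 0 ∧
    ¬ ∃ e : (MvPolynomial (Fin 2) (ZMod 2) ⧸ I₁ n) ≃ₐ[ZMod 2]
            (MvPolynomial (Fin 2) (ZMod 2) ⧸ I₂ n),
        ∀ i : ℕ, Submodule.map e.toLinearMap (comp (I₁ n) i) = comp (I₂ n) i := by
  have hgen : (X 1 : MvPolynomial (Fin 2) (ZMod 2)) ^ 2 + X 0 ^ 3 ∈ I₁ n :=
    Ideal.subset_span (by simp)
  have h1 : Ideal.Quotient.mk (I₁ n) (X 1) ^ 2 = Ideal.Quotient.mk (I₁ n) (X 0) ^ 3 := by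
    have h := Ideal.Quotient.eq_zero_iff_mem.mpr hgen
    rw [map_add, map_pow, map_pow] at h
    have := eq_neg_of_add_eq_zero_left h
    rw [this]
    exact neg_eq_of_add_eq_zero_left (aux_char2_add_self _)
  have h2 : Ideal.Quotient.mk (I₁ n) (X 0) ^ 3 ≠ 0 := by
    rw [← map_pow, Ne, Ideal.Quotient.eq_zero_iff_mem]
    exact aux_x3_not_mem n hn
  refine ⟨h1, h2, ?_⟩
  rintro ⟨e, he⟩
  -- the class of `y` lies in the degree-3 component
  have hy : Ideal.Quotient.mk (I₁ n) (X 1) ∈ comp (I₁ n) 3 := by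
    refine ⟨X 1, ?_, rfl⟩
    have := isWeightedHomogeneous_X (ZMod 2) ![2, 3] (1 : Fin 2)
    simpa using this
  have hey : e (Ideal.Quotient.mk (I₁ n) (X 1)) ∈ comp (I₂ n) 3 := by
    rw [← he 3]
    exact ⟨_, hy, rfl⟩
  obtain ⟨p, hp, hpe⟩ := hey
  have hyne : Ideal.Quotient.mk (I₁ n) (X 1) ≠ 0 := by
    intro h
    apply h2
    rw [← h1, h, zero_pow two_ne_zero]
  rcases aux_wh3 p hp with rfl | rfl
  · apply hyne
    apply e.injective
    rw [map_zero, ← hpe, map_zero]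
  · -- e(y) = y', so e(x³) = e(y²) = y'² = 0, contradicting x³ ≠ 0
    apply h2
    apply e.injective
    rw [map_zero, ← h1, map_pow, ← hpe]
    show (Ideal.Quotient.mk (I₂ n) (X 1)) ^ 2 = 0
    rw [← map_pow, Ideal.Quotient.eq_zero_iff_mem]
    exact Ideal.subset_span (by simp)

end
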